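/- arXiv:0910.3787 — 7 statements merged into one kernel-verified Lean document; each statement's English description precedes it below -/
import Mathlib

section
/- Let k ≥ 2, 0 ≤ β < 1, and let p, q be analytic on the unit disk with p(0) = q(0) = 1 and Re p(z) > β, Re q(z) > β on the disk. Define h(z) = ((k+2)/4) p(z) - ((k-2)/4) q(z). Then Re h(z) > 0 for all |z| < r(k,β), where r(k,β) = ((1-β)k - √((1-β)²k² - 4(1-2β)))/(2(1-2β)) if β ≠ 1/2, and r(k,β) = 2/k if β = 1/2. -/
open Metric

/-- Quadratic positivity below the smaller root. -/
lemma quad_pos_aux (A B s r t : ℝ) (hA : A ≠ 0) (hB : 0 < B) (hs0 : 0 ≤ s)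
    (hs2 : s^2 = B^2 - 4*A) (hr : 2*A*r = B - s) (ht0 : 0 ≤ t) (htr : t < r) :
    0 < A*t^2 - B*t + 1 := by
  have h4 : 4*A*(A*r^2 - B*r + 1) = 0 := by
    linear_combination (2*A*r - B - s) * hr + hs2
  have hgr : A*r^2 - B*r + 1 = 0 := by
    rcases mul_eq_zero.mp h4 with h | h
    · exact absurd h (by simpa using hA)
    · exact h
  have hfac : A*t^2 - B*t + 1 = (r - t)*(B - A*(t+r)) := by linear_combination hgr
  have hpos2 : 0 < B - A*(t+r) := by
    rcases le_or_gt A 0 with hA0 | hA0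
    · nlinarith [mul_nonpos_of_nonpos_of_nonneg hA0 (by linarith : (0:ℝ) ≤ t + r)]
    · nlinarith [mul_lt_mul_of_pos_left htr hA0]
  rw [hfac]
  exact mul_pos (by linarith) hpos2

/-- Carathéodory-type distortion bounds for functions with `Re f > β`, `f 0 = 1`. -/
lemma caratheodory_bound (β : ℝ) (hβ1 : β < 1) (f : ℂ → ℂ)
    (hf : DifferentiableOn ℂ f (ball (0:ℂ) 1)) (hf0 : f 0 = 1)
    (hre : ∀ z ∈ ball (0:ℂ) 1, β < (f z).re)
    (z : ℂ) (hz : z ∈ ball (0:ℂ) 1) (t : ℝ) (ht : ‖z‖ ≤ t) (ht1 : t ≤ 1) :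
    1 - (1-2*β)*t ≤ (f z).re * (1+t) ∧ (f z).re * (1-t) ≤ 1 + (1-2*β)*t := by
  have ht0 : 0 ≤ t := le_trans (norm_nonneg z) ht
  set c : ℂ := ((2*β - 1 : ℝ) : ℂ) with hc
  have hden : ∀ ζ ∈ ball (0:ℂ) 1, f ζ - c ≠ 0 := by
    intro ζ hζ h0
    have h1 : (f ζ - c).re = 0 := by rw [h0]; simp
    have h2 : (f ζ).re > β := hre ζ hζ
    rw [Complex.sub_re, hc] at h1
    simp only [Complex.ofReal_re] at h1
    linarith
  set w : ℂ → ℂ := fun ζ => (f ζ - 1)/(f ζ - c) with hw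
  have hwdiff : DifferentiableOn ℂ w (ball (0:ℂ) 1) :=
    (hf.sub (differentiableOn_const 1)).div (hf.sub (differentiableOn_const c)) hden
  have hmaps : Set.MapsTo w (ball (0:ℂ) 1) (ball (0:ℂ) 1) := by
    intro ζ hζ
    rw [mem_ball_zero_iff]
    have hd := hden ζ hζ
    have hdpos : 0 < ‖f ζ - c‖ := norm_pos_iff.mpr hd
    have hx : β < (f ζ).re := hre ζ hζ
    have hlt : ‖f ζ - 1‖ < ‖f ζ - c‖ := by
      have hsq : ‖f ζ - 1‖^2 < ‖f ζ - c‖^2 := by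
        rw [Complex.sq_norm, Complex.sq_norm,
          Complex.normSq_apply, Complex.normSq_apply]
        simp only [Complex.sub_re, Complex.sub_im, Complex.one_re, Complex.one_im, hc,
          Complex.ofReal_re, Complex.ofReal_im]
        nlinarith [hx, hβ1]
      exact lt_of_pow_lt_pow_left₀ 2 (norm_nonneg _) hsq
    simp only [hw, norm_div]
    rw [div_lt_one hdpos]
    exact hlt
  have hw0 : w 0 = 0 := by simp [hw, hf0]
  have hzlt : ‖z‖ < 1 := by exact mem_ball_zero_iff.mp hz
  have hsch := Complex.norm_le_norm_of_mapsTo_ball hwdiff (hmaps.mono_right ball_subset_closedBall) hw0 hzlt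
  -- translate Schwarz: ‖f z - 1‖ ≤ ‖z‖ * ‖f z - c‖
  have hd := hden z hz
  have hdpos : 0 < ‖f z - c‖ := norm_pos_iff.mpr hd
  have hineq : ‖f z - 1‖ ≤ t * ‖f z - c‖ := by
    have h1 : ‖w z‖ ≤ ‖z‖ := by
      exact hsch
    simp only [hw, norm_div] at h1
    rw [div_le_iff₀ hdpos] at h1
    calc ‖f z - 1‖ ≤ ‖z‖ * ‖f z - c‖ := h1
      _ ≤ t * ‖f z - c‖ := by
          exact mul_le_mul_of_nonneg_right ht (le_of_lt hdpos)
  set x := (f z).re with hxdef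
  set y := (f z).im with hydef
  have hx : β < x := hre z hz
  have hsq : (x-1)^2 + y^2 ≤ t^2 * ((x - (2*β-1))^2 + y^2) := by
    have h2 : ‖f z - 1‖^2 ≤ (t * ‖f z - c‖)^2 :=
      pow_le_pow_left₀ (norm_nonneg _) hineq 2
    rw [mul_pow, Complex.sq_norm, Complex.sq_norm,
      Complex.normSq_apply, Complex.normSq_apply] at h2
    simp only [Complex.sub_re, Complex.sub_im, Complex.one_re, Complex.one_im, hc,
      Complex.ofReal_re, Complex.ofReal_im] at h2
    convert h2 using 2 <;> ring
  have h1 : (x-1)^2 ≤ (t*(x - 2*β + 1))^2 := by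
    nlinarith [mul_nonneg (by nlinarith : (0:ℝ) ≤ 1 - t^2) (sq_nonneg y)]
  have hpos : 0 ≤ t*(x - 2*β + 1) := by
    apply mul_nonneg ht0; nlinarith
  have habs : |x - 1| ≤ t*(x - 2*β + 1) := by
    rw [← Real.sqrt_sq hpos, ← Real.sqrt_sq_eq_abs]
    exact Real.sqrt_le_sqrt h1
  rw [abs_le] at habs
  constructor <;> nlinarith [habs.1, habs.2]

theorem Pk_beta_positive_realpart (k β : ℝ) (hk : 2 ≤ k) (hβ0 : 0 ≤ β) (hβ1 : β < 1)
    (p q : ℂ → ℂ)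
    (hp : DifferentiableOn ℂ p (ball (0:ℂ) 1)) (hq : DifferentiableOn ℂ q (ball (0:ℂ) 1))
    (hp0 : p 0 = 1) (hq0 : q 0 = 1)
    (hpre : ∀ z ∈ ball (0:ℂ) 1, β < (p z).re)
    (hqre : ∀ z ∈ ball (0:ℂ) 1, β < (q z).re)
    (r : ℝ)
    (hr : r = if β = 1/2 then 2/k
          else ((1-β)*k - Real.sqrt ((1-β)^2*k^2 - 4*(1-2*β))) / (2*(1-2*β))) :
    ∀ z : ℂ, ‖z‖ < r →
      0 < ((((k:ℂ)+2)/4) * p z - (((k:ℂ)-2)/4) * q z).re := by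
  have hk0 : (0:ℝ) < k := by linarith
  -- key fact: for any 0 ≤ t < r, the quadratic is positive
  have hgpos : ∀ t : ℝ, 0 ≤ t → t < r → 0 < (1-2*β)*t^2 - (1-β)*k*t + 1 := by
    intro t ht0 htr
    by_cases hb : β = 1/2
    · subst hb
      rw [if_pos rfl] at hr
      have hkt : k * t < 2 := by
        rw [hr] at htr
        calc k * t < k * (2/k) := by exact mul_lt_mul_of_pos_left htr hk0
          _ = 2 := by field_simp
      nlinarith
    · rw [if_neg hb] at hr
      have hA : (1 - 2*β) ≠ 0 := fun h => hb (by linarith)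
      have hD : (0:ℝ) ≤ (1-β)^2*k^2 - 4*(1-2*β) := by
        nlinarith [sq_nonneg β, mul_nonneg (sq_nonneg (1-β)) (by nlinarith : (0:ℝ) ≤ k^2 - 4)]
      set s := Real.sqrt ((1-β)^2*k^2 - 4*(1-2*β)) with hs
      have hs0 : 0 ≤ s := Real.sqrt_nonneg _
      have hs2 : s^2 = ((1-β)*k)^2 - 4*(1-2*β) := by
        rw [hs, Real.sq_sqrt hD]; ring
      have hr2 : 2*(1-2*β)*r = (1-β)*k - s := by
        rw [hr]; field_simp
      exact quad_pos_aux (1-2*β) ((1-β)*k) s r t hA (by nlinarith) hs0 hs2 hr2 ht0 htr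
  -- r ≤ 1
  have hr1 : r ≤ 1 := by
    by_contra h
    push_neg at h
    have := hgpos 1 zero_le_one h
    nlinarith [mul_nonneg (by linarith : (0:ℝ) ≤ 1 - β) (by linarith : (0:ℝ) ≤ k - 2)]
  intro z hz
  set t := ‖z‖ with htdef
  have ht0 : 0 ≤ t := norm_nonneg z
  have ht1 : t < 1 := lt_of_lt_of_le hz hr1
  have hzball : z ∈ ball (0:ℂ) 1 := mem_ball_zero_iff.mpr ht1
  obtain ⟨hxp, _⟩ := caratheodory_bound β hβ1 p hp hp0 hpre z hzball t le_rfl (le_of_lt ht1)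
  obtain ⟨_, hxq⟩ := caratheodory_bound β hβ1 q hq hq0 hqre z hzball t le_rfl (le_of_lt ht1)
  have hg := hgpos t ht0 hz
  have e1 : ((k:ℂ)+2)/4 = (((k+2)/4 : ℝ) : ℂ) := by push_cast; ring
  have e2 : ((k:ℂ)-2)/4 = (((k-2)/4 : ℝ) : ℂ) := by push_cast; ring
  rw [e1, e2, Complex.sub_re, Complex.re_ofReal_mul, Complex.re_ofReal_mul]
  set xp := (p z).re
  set xq := (q z).re
  have hP := mul_le_mul_of_nonneg_left hxp (show (0:ℝ) ≤ (k+2)*(1-t) by nlinarith)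
  have hQ := mul_le_mul_of_nonneg_left hxq (show (0:ℝ) ≤ (k-2)*(1+t) by nlinarith)
  nlinarith [hP, hQ, hg, mul_pos (by linarith : (0:ℝ) < 1 - t) (by linarith : (0:ℝ) < 1 + t)]
end

section
/- Let k ≥ 2 and let p, q be analytic on the unit disk with p(0) = q(0) = 1 and positive real part. Set h(z) = ((k+2)/4)p(z) - ((k-2)/4)q(z). Then Re h(z) > 0 for all z with |z| < (k - √(k²-4))/2. -/
open Metric

lemma harnack_bounds (p : ℂ → ℂ)
    (hp : DifferentiableOn ℂ p (ball (0:ℂ) 1)) (hp0 : p 0 = 1)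
    (hpre : ∀ z ∈ ball (0:ℂ) 1, 0 < (p z).re)
    (z : ℂ) (hz : ‖z‖ < 1) :
    (1 - ‖z‖) / (1 + ‖z‖) ≤ (p z).re ∧ (p z).re ≤ (1 + ‖z‖) / (1 - ‖z‖) := by
  have hzball : z ∈ ball (0:ℂ) 1 := by simpa [mem_ball_zero_iff] using hz
  set w : ℂ → ℂ := fun z => (p z - 1) / (p z + 1) with hw_def
  have hne : ∀ x ∈ ball (0:ℂ) 1, p x + 1 ≠ 0 := by
    intro x hx h
    have := hpre x hx
    have : (p x + 1).re = (p x).re + 1 := by simp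
    rw [h] at this
    simp at this
    linarith [hpre x hx]
  have hwdiff : DifferentiableOn ℂ w (ball (0:ℂ) 1) :=
    (hp.sub (differentiableOn_const 1)).div (hp.add (differentiableOn_const 1)) hne
  have hmaps : Set.MapsTo w (ball (0:ℂ) 1) (ball (0:ℂ) 1) := by
    intro x hx
    rw [mem_ball_zero_iff]
    have hx1 : 0 < (p x).re := hpre x hx
    have h2 : ‖p x - 1‖ < ‖p x + 1‖ := by
      have := Complex.sq_norm (p x - 1)
      have h3 : Complex.normSq (p x - 1) < Complex.normSq (p x + 1) := by
        simp only [Complex.normSq_apply, Complex.sub_re, Complex.sub_im, Complex.add_re,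
          Complex.add_im, Complex.one_re, Complex.one_im]
        nlinarith
      nlinarith [norm_nonneg (p x - 1), norm_nonneg (p x + 1),
        Complex.sq_norm (p x - 1), Complex.sq_norm (p x + 1)]
    calc ‖w x‖ = ‖p x - 1‖ / ‖p x + 1‖ := by
          simp [hw_def, map_div₀]
      _ < 1 := by
          rw [div_lt_one]; exact h2
          exact lt_of_le_of_lt (norm_nonneg _) h2
  have hw0 : w 0 = 0 := by simp [hw_def, hp0]
  have hschwarz : ‖w z‖ ≤ ‖z‖ :=
    Complex.norm_le_norm_of_mapsTo_ball hwdiff (hmaps.mono_right ball_subset_closedBall) hw0 hz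
  -- recover p z from w z
  have hwz1 : ‖w z‖ < 1 := by
    simpa using mem_ball_zero_iff.mp (hmaps hzball)
  have hne1 : (1 : ℂ) - w z ≠ 0 := by
    intro h
    have : ‖w z‖ = 1 := by
      have : w z = 1 := by linear_combination -h
      simp [this]
    linarith
  have hpz : p z = (1 + w z) / (1 - w z) := by
    have hd := hne z hzball
    have hA : (1:ℂ) + w z = 2 * p z / (p z + 1) := by
      rw [hw_def]; field_simp; ring
    have hB : (1:ℂ) - w z = 2 / (p z + 1) := by
      rw [hw_def]; field_simp; ring
    rw [hA, hB]
    field_simp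
  set u := w z with hu
  set r := ‖z‖ with hr
  have hs : ‖u‖ ≤ r := by simpa using hschwarz
  have hr0 : 0 ≤ r := norm_nonneg z
  have hrepz : (p z).re = (1 - Complex.normSq u) / Complex.normSq (1 - u) := by
    rw [hpz, Complex.div_re]
    congr 1
    · simp [Complex.normSq_apply, Complex.add_re, Complex.add_im, Complex.sub_re, Complex.sub_im]
      ring
  have hnsq : Complex.normSq (1 - u) = 1 - 2 * u.re + Complex.normSq u := by
    simp [Complex.normSq_apply, Complex.sub_re, Complex.sub_im]; ring
  have hur : |u.re| ≤ ‖u‖ := Complex.abs_re_le_norm u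
  have habs : Complex.normSq u = (‖u‖)^2 := (Complex.sq_norm u).symm
  have hspos : 0 ≤ ‖u‖ := norm_nonneg u
  have hdenpos : 0 < Complex.normSq (1 - u) := by
    rw [Complex.normSq_pos]; exact hne1
  obtain ⟨h1, h2⟩ := abs_le.mp hur
  rw [hrepz]
  constructor
  · rw [div_le_div_iff₀ (by linarith) hdenpos]
    rw [hnsq, habs]
    nlinarith [hspos, hs, hz, h1, h2]
  · rw [div_le_div_iff₀ hdenpos (by linarith)]
    rw [hnsq, habs]
    nlinarith [hspos, hs, hz, h1, h2]

theorem pinchuk_lemma (k : ℝ) (hk : 2 ≤ k)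
    (p q : ℂ → ℂ)
    (hp : DifferentiableOn ℂ p (ball (0:ℂ) 1)) (hq : DifferentiableOn ℂ q (ball (0:ℂ) 1))
    (hp0 : p 0 = 1) (hq0 : q 0 = 1)
    (hpre : ∀ z ∈ ball (0:ℂ) 1, 0 < (p z).re)
    (hqre : ∀ z ∈ ball (0:ℂ) 1, 0 < (q z).re) :
    ∀ z : ℂ, ‖z‖ < (k - Real.sqrt (k^2 - 4)) / 2 →
      0 < ((((k:ℂ)+2)/4) * p z - (((k:ℂ)-2)/4) * q z).re := by
  intro z hz
  set r := ‖z‖ with hr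
  have hr0 : 0 ≤ r := norm_nonneg z
  have hk4 : 0 ≤ k^2 - 4 := by nlinarith
  have hsqrt : Real.sqrt (k^2 - 4) ^ 2 = k^2 - 4 := Real.sq_sqrt hk4
  have hsqrt_nonneg : 0 ≤ Real.sqrt (k^2 - 4) := Real.sqrt_nonneg _
  have hsqrt_ge : k - 2 ≤ Real.sqrt (k^2 - 4) := by
    nlinarith [Real.sqrt_nonneg (k^2-4)]
  -- radius ≤ 1
  have hR1 : (k - Real.sqrt (k^2 - 4)) / 2 ≤ 1 := by linarith
  have hr1 : r < 1 := lt_of_lt_of_le hz hR1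
  -- key polynomial inequality
  have hkey : 0 < r^2 - k*r + 1 := by
    have h1 : Real.sqrt (k^2-4) < k - 2 * r := by linarith
    nlinarith
  obtain ⟨hA, _⟩ := harnack_bounds p hp hp0 hpre z hr1
  obtain ⟨_, hB⟩ := harnack_bounds q hq hq0 hqre z hr1
  set A := (p z).re
  set B := (q z).re
  have hre : ((((k:ℂ)+2)/4) * p z - (((k:ℂ)-2)/4) * q z).re
      = (k+2)/4 * A - (k-2)/4 * B := by
    have e1 : (((k:ℂ)+2)/4) = (((k+2)/4 : ℝ) : ℂ) := by push_cast; ring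
    have e2 : (((k:ℂ)-2)/4) = (((k-2)/4 : ℝ) : ℂ) := by push_cast; ring
    rw [e1, e2, Complex.sub_re, Complex.re_ofReal_mul, Complex.re_ofReal_mul]
  rw [hre]
  have hden1 : 0 < 1 + r := by linarith
  have hden2 : 0 < 1 - r := by linarith
  have hA' : (1 - r) ≤ A * (1 + r) := by
    rwa [div_le_iff₀ hden1] at hA
  have hB' : B * (1 - r) ≤ 1 + r := by
    rwa [le_div_iff₀ hden2] at hB
  have hk2 : 0 ≤ k - 2 := by linarith
  nlinarith [mul_pos hden1 hden2, mul_nonneg hk2 (sub_nonneg.mpr hB'),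
    mul_nonneg (by linarith : (0:ℝ) ≤ k + 2) (sub_nonneg.mpr hA'),
    mul_nonneg (mul_nonneg hk2 (sub_nonneg.mpr hB')) hden1.le,
    mul_nonneg (mul_nonneg (by linarith : (0:ℝ) ≤ k + 2) (sub_nonneg.mpr hA')) hden2.le]
end

section
/- For k > 2, the function H(z) = ((k+2)/4)·L₀(-z) - ((k-2)/4)·L₀(z), where L₀(z) = (1+z)/(1-z), satisfies Re H(r) = (r² - k r + 1)/(1 - r²) for real 0 < r < 1; in particular Re H(r) = 0 exactly when r = (k - √(k²-4))/2, so H does not have positive real part on any disk of radius larger than (k - √(k²-4))/2. -/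
noncomputable def L0 (z : ℂ) : ℂ := (1 + z) / (1 - z)

noncomputable def Hext (k : ℝ) (z : ℂ) : ℂ :=
  (((k:ℂ)+2)/4) * L0 (-z) - (((k:ℂ)-2)/4) * L0 z

lemma Hext_eq (k r : ℝ) (h0 : 0 < r) (h1 : r < 1) :
    Hext k (r:ℂ) = (((r^2 - k*r + 1) / (1 - r^2) : ℝ) : ℂ) := by
  have hr1 : (1 : ℂ) - r ≠ 0 := by
    intro h
    have : (r:ℂ) = 1 := by linear_combination -h
    exact absurd (Complex.ofReal_inj.mp (by exact_mod_cast this)) (by linarith)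
  have hr2 : (1 : ℂ) + r ≠ 0 := by
    intro h
    have : (r:ℂ) = ((-1:ℝ):ℂ) := by push_cast; linear_combination h
    exact absurd (Complex.ofReal_inj.mp this) (by linarith)
  have hr3 : (1 : ℂ) - (r:ℂ)^2 ≠ 0 := by
    have : (1 : ℂ) - (r:ℂ)^2 = (1 - r) * (1 + r) := by ring
    rw [this]; exact mul_ne_zero hr1 hr2
  unfold Hext L0
  push_cast
  rw [sub_neg_eq_add]
  field_simp
  ring

theorem extremal_H_real_part (k : ℝ) (hk : 2 < k) :
    (∀ r : ℝ, 0 < r → r < 1 →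
      (Hext k (r:ℂ)).re = (r^2 - k*r + 1) / (1 - r^2)) ∧
    (∀ r : ℝ, 0 < r → r < 1 →
      ((Hext k (r:ℂ)).re = 0 ↔ r = (k - Real.sqrt (k^2 - 4)) / 2)) := by
  have hre : ∀ r : ℝ, 0 < r → r < 1 →
      (Hext k (r:ℂ)).re = (r^2 - k*r + 1) / (1 - r^2) := by
    intro r h0 h1
    rw [Hext_eq k r h0 h1, Complex.ofReal_re]
  refine ⟨hre, fun r h0 h1 => ?_⟩
  rw [hre r h0 h1]
  have hden : 0 < 1 - r^2 := by nlinarith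
  have hs2 : 0 ≤ k^2 - 4 := by nlinarith
  set s := Real.sqrt (k^2 - 4) with hs
  have hsq : s^2 = k^2 - 4 := Real.sq_sqrt hs2
  have hsnn : 0 ≤ s := Real.sqrt_nonneg _
  constructor
  · intro h
    have hnum : r^2 - k*r + 1 = 0 := by
      field_simp at h; linarith
    have hfac : (r - (k - s)/2) * (r - (k + s)/2) = 0 := by
      nlinarith [hsq]
    rcases mul_eq_zero.mp hfac with h' | h'
    · linarith
    · exfalso
      have : r = (k + s)/2 := by linarith
      nlinarith
  · intro h
    have hnum : r^2 - k*r + 1 = 0 := by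
      rw [h]; nlinarith [hsq]
    rw [hnum]; simp
end

section
/- Let σ > 0, 0 ≤ β < 1, and let p be analytic on the unit disk with p(0) = 1 and Re p(z) > β. Then the transform φ_σ(p)(z) = (σ/z^σ) ∫₀^z t^{σ-1} p(t) dt also satisfies Re φ_σ(p)(z) > β for all z in the unit disk. -/
open Metric intervalIntegral

noncomputable def phiT (σ : ℝ) (p : ℂ → ℂ) (z : ℂ) : ℂ :=
  if z = 0 then 1 else
    ((σ:ℂ) / z ^ (σ:ℂ)) *
      (z * ∫ s in (0:ℝ)..1, ((s:ℂ) * z) ^ ((σ:ℂ) - 1) * p ((s:ℂ) * z))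

lemma aux_cpow_ofReal_mul {s : ℝ} (hs : 0 < s) {z : ℂ} (hz : z ≠ 0) (c : ℂ) :
    ((s:ℂ) * z) ^ c = (s:ℂ) ^ c * z ^ c := by
  have hs' : (s:ℂ) ≠ 0 := by exact_mod_cast hs.ne'
  rw [Complex.cpow_def_of_ne_zero (mul_ne_zero hs' hz), Complex.cpow_def_of_ne_zero hs',
    Complex.cpow_def_of_ne_zero hz, Complex.log_ofReal_mul hs hz, Complex.ofReal_log hs.le,
    add_mul, Complex.exp_add]

lemma aux_ofReal_intervalIntegrable {f : ℝ → ℝ} {a b : ℝ}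
    (hf : IntervalIntegrable f MeasureTheory.volume a b) :
    IntervalIntegrable (fun s => ((f s : ℝ) : ℂ)) MeasureTheory.volume a b :=
  ⟨hf.1.ofReal, hf.2.ofReal⟩

theorem phi_preserves_P_beta (σ β : ℝ) (hσ : 0 < σ) (hβ0 : 0 ≤ β) (hβ1 : β < 1)
    (p : ℂ → ℂ) (hp : DifferentiableOn ℂ p (ball (0:ℂ) 1)) (hp0 : p 0 = 1)
    (hpre : ∀ z ∈ ball (0:ℂ) 1, β < (p z).re) :
    ∀ z ∈ ball (0:ℂ) 1, β < (phiT σ p z).re := by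
  intro z hz
  by_cases hz0 : z = 0
  · simp [phiT, hz0]; linarith
  have hzn : ‖z‖ < 1 := by simpa [mem_ball, dist_eq_norm] using hz
  -- membership of the segment in the ball
  have hmem : ∀ s ∈ Set.Icc (0:ℝ) 1, (s:ℂ) * z ∈ ball (0:ℂ) 1 := by
    intro s hs
    simp only [mem_ball, dist_eq_norm, sub_zero, norm_mul, Complex.norm_real,
      Real.norm_eq_abs, abs_of_nonneg hs.1]
    calc s * ‖z‖ ≤ 1 * ‖z‖ := by
          apply mul_le_mul_of_nonneg_right hs.2 (norm_nonneg z)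
      _ < 1 := by simpa using hzn
  -- continuity of s ↦ p (s z) on [0,1]
  have hcont : ContinuousOn (fun s : ℝ => p ((s:ℂ) * z)) (Set.Icc 0 1) := by
    apply (hp.continuousOn).comp
    · exact ((Complex.continuous_ofReal.mul continuous_const)).continuousOn
    · exact hmem
  have hucc : Set.uIcc (0:ℝ) 1 = Set.Icc 0 1 := Set.uIcc_of_le zero_le_one
  -- real rpow integrability
  have hg : IntervalIntegrable (fun s : ℝ => s ^ (σ - 1)) MeasureTheory.volume 0 1 :=
    intervalIntegral.intervalIntegrable_rpow' (by linarith)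
  -- complex integrability of the reduced integrand
  have hF : IntervalIntegrable (fun s : ℝ => ((s ^ (σ - 1) : ℝ) : ℂ) * p ((s:ℂ) * z))
      MeasureTheory.volume 0 1 := by
    apply (aux_ofReal_intervalIntegrable hg).mul_continuousOn
    rwa [hucc]
  -- rewrite phiT
  have hcast : (σ:ℂ) - 1 = ((σ - 1 : ℝ) : ℂ) := by push_cast; ring
  have hEq : Set.EqOn (fun s : ℝ => ((s:ℂ) * z) ^ ((σ:ℂ) - 1) * p ((s:ℂ) * z))
      (fun s : ℝ => z ^ ((σ:ℂ) - 1) * (((s ^ (σ - 1) : ℝ) : ℂ) * p ((s:ℂ) * z)))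
      (Set.uIcc (0:ℝ) 1) := by
    intro s hs
    rw [hucc] at hs
    rcases eq_or_lt_of_le hs.1 with h0 | h0
    · simp only [← h0]
      by_cases h1 : σ = 1
      · simp [h1]
      · have hne : (σ:ℂ) - 1 ≠ 0 := by
          simpa [sub_eq_zero] using fun h => h1 (by exact_mod_cast h)
        have hne' : σ - 1 ≠ 0 := sub_ne_zero.mpr h1
        simp [Complex.zero_cpow hne, Real.zero_rpow hne']
    · simp only
      rw [aux_cpow_ofReal_mul h0 hz0, hcast, ← Complex.ofReal_cpow h0.le]
      ring
  have hzσ : z ^ (σ:ℂ) ≠ 0 := by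
    rw [Complex.cpow_def_of_ne_zero hz0]; exact Complex.exp_ne_zero _
  have hzsplit : z * z ^ ((σ:ℂ) - 1) = z ^ (σ:ℂ) := by
    have h := Complex.cpow_add 1 ((σ:ℂ) - 1) hz0
    rw [Complex.cpow_one] at h
    have h2 : (1:ℂ) + ((σ:ℂ) - 1) = (σ:ℂ) := by ring
    rw [h2] at h
    exact h.symm
  have hphi : phiT σ p z =
      (σ:ℂ) * ∫ s in (0:ℝ)..1, ((s ^ (σ - 1) : ℝ) : ℂ) * p ((s:ℂ) * z) := by
    rw [phiT, if_neg hz0, intervalIntegral.integral_congr hEq,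
      intervalIntegral.integral_const_mul, ← mul_assoc z, hzsplit]
    field_simp
    simp only [mul_comm z]
  -- take real parts
  have hre : (phiT σ p z).re = σ * ∫ s in (0:ℝ)..1, s ^ (σ - 1) * (p ((s:ℂ) * z)).re := by
    rw [hphi, Complex.re_ofReal_mul]
    congr 1
    have := (Complex.reCLM.intervalIntegral_comp_comm hF).symm
    simp only [Complex.reCLM_apply] at this
    rw [this]
    apply intervalIntegral.integral_congr
    intro s _
    simp [Complex.re_ofReal_mul]
  rw [hre]
  -- positivity
  have h2 : IntervalIntegrable (fun s : ℝ => s ^ (σ - 1) * (p ((s:ℂ) * z)).re)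
      MeasureTheory.volume 0 1 := by
    apply hg.mul_continuousOn
    rw [hucc]
    exact Complex.continuous_re.comp_continuousOn hcont
  have h1 : ∫ s in (0:ℝ)..1, s ^ (σ - 1) = 1 / σ := by
    rw [integral_rpow (Or.inl (by linarith))]
    rw [Real.one_rpow, Real.zero_rpow (by linarith : σ - 1 + 1 ≠ 0)]
    ring_nf
  have hpos : 0 < ∫ s in (0:ℝ)..1, s ^ (σ - 1) * ((p ((s:ℂ) * z)).re - β) := by
    apply intervalIntegral.intervalIntegral_pos_of_pos_on
    · have : (fun s : ℝ => s ^ (σ - 1) * ((p ((s:ℂ) * z)).re - β)) =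
          fun s : ℝ => s ^ (σ - 1) * (p ((s:ℂ) * z)).re - β * s ^ (σ - 1) := by
        funext s; ring
      rw [this]
      exact h2.sub (hg.const_mul β)
    · intro s hs
      have hs01 : s ∈ Set.Icc (0:ℝ) 1 := ⟨hs.1.le, hs.2.le⟩
      have := hpre _ (hmem s hs01)
      have hrp : 0 < s ^ (σ - 1) := Real.rpow_pos_of_pos hs.1 _
      nlinarith
    · exact zero_lt_one
  have hsplit : ∫ s in (0:ℝ)..1, s ^ (σ - 1) * ((p ((s:ℂ) * z)).re - β) =
      (∫ s in (0:ℝ)..1, s ^ (σ - 1) * (p ((s:ℂ) * z)).re) - β / σ := by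
    have hfun : (fun s : ℝ => s ^ (σ - 1) * ((p ((s:ℂ) * z)).re - β)) =
        fun s : ℝ => s ^ (σ - 1) * (p ((s:ℂ) * z)).re - β * s ^ (σ - 1) := by
      funext s; ring
    rw [hfun, intervalIntegral.integral_sub h2 (hg.const_mul β),
      intervalIntegral.integral_const_mul, h1]
    ring
  rw [hsplit] at hpos
  have := mul_pos hσ hpos
  have hβσ : σ * (β / σ) = β := by field_simp
  nlinarith
end

section
/- For 0 ≤ β < 1, k ≥ 2 and 0 ≤ ρ < 1, if h(z) = ((k+2)/4)p(z) - ((k-2)/4)q(z) with p, q in P(β), then for every z with |z| = ρ: Re h(z) ≥ ((1-2β)ρ² - (1-β)kρ + 1)/(1 - ρ²). -/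
open Metric

section Aux
open Complex

lemma carath_bounds (β ρ : ℝ) (hβ1 : β < 1) (hρ0 : 0 ≤ ρ) (hρ1 : ρ < 1)
    (p : ℂ → ℂ) (hp : DifferentiableOn ℂ p (ball (0:ℂ) 1)) (hp0 : p 0 = 1)
    (hpre : ∀ z ∈ ball (0:ℂ) 1, β < (p z).re)
    (z : ℂ) (hz : ‖z‖ = ρ) :
    (1-(1-2*β)*ρ)/(1+ρ) ≤ (p z).re ∧ (p z).re ≤ (1+(1-2*β)*ρ)/(1-ρ) := by
  have hzball : z ∈ ball (0:ℂ) 1 := by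
    rw [mem_ball_zero_iff, hz]; exact hρ1
  set ω : ℂ → ℂ := fun w => (p w - 1) / (p w + 1 - 2*β) with hωdef
  have hden : ∀ w ∈ ball (0:ℂ) 1, p w + 1 - 2*(β:ℂ) ≠ 0 := by
    intro w hw h0
    have h1 : (p w + 1 - 2*(β:ℂ)).re = (p w).re + 1 - 2*β := by simp
    have h2 := hpre w hw
    rw [h0] at h1
    simp at h1
    linarith
  have hωd : DifferentiableOn ℂ ω (ball (0:ℂ) 1) :=
    DifferentiableOn.div (hp.sub (differentiableOn_const _))
      ((hp.add (differentiableOn_const _)).sub (differentiableOn_const _)) hden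
  have hmaps : Set.MapsTo ω (ball (0:ℂ) 1) (ball (0:ℂ) 1) := by
    intro w hw
    rw [mem_ball_zero_iff]
    have hd := hden w hw
    have hre := hpre w hw
    have hns : Complex.normSq (p w - 1) < Complex.normSq (p w + 1 - 2*(β:ℂ)) := by
      simp only [Complex.normSq_apply, Complex.sub_re, Complex.add_re, Complex.one_re,
        Complex.sub_im, Complex.add_im, Complex.one_im, Complex.mul_re, Complex.mul_im,
        Complex.ofReal_re, Complex.ofReal_im, Complex.re_ofNat, Complex.im_ofNat]
      nlinarith [(p w).im]
    have := Real.sqrt_lt_sqrt (Complex.normSq_nonneg _) hns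
    rw [← Complex.norm_def, ← Complex.norm_def] at this
    calc ‖ω w‖ = ‖p w - 1‖ / ‖p w + 1 - 2*β‖ := by
          simp [hωdef, map_div₀]
      _ < 1 := by
          rw [div_lt_one (norm_pos_iff.mpr hd)]
          exact this
  have hω0 : ω 0 = 0 := by simp [hωdef, hp0]
  have hschwarz : ‖ω z‖ ≤ ‖z‖ :=
    Complex.norm_le_norm_of_mapsTo_ball hωd (hmaps.mono_right ball_subset_closedBall) hω0
      (by rw [hz]; exact hρ1)
  rw [hz] at hschwarz
  set u := (ω z).re with hu
  set v := (ω z).im with hv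
  have habs := Complex.abs_re_le_norm (ω z)
  have hs2 : u^2 + v^2 ≤ ρ^2 := by
    have := Complex.sq_norm (ω z)
    nlinarith [norm_nonneg (ω z), Complex.normSq_apply (ω z)]
  have hule : u ≤ ρ := le_trans (le_abs_self u) (le_trans habs hschwarz)
  have huge : -ρ ≤ u := by
    have := neg_abs_le u
    have h2 : |u| ≤ ρ := le_trans habs hschwarz
    linarith [abs_le.mp h2]
  have hP : p z * (1 - ω z) = 1 + (1-2*(β:ℂ)) * ω z := by
    rw [hωdef]
    field_simp [hden z hzball]
    ring
  have hRe : (p z).re * (1-u) + (p z).im * v = 1 + (1-2*β)*u := by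
    have := congrArg Complex.re hP
    simp [Complex.mul_re, Complex.sub_re, Complex.sub_im, Complex.add_re, Complex.mul_im,
      ← hu, ← hv] at this
    linarith
  have hIm : -(p z).re * v + (p z).im * (1-u) = (1-2*β)*v := by
    have := congrArg Complex.im hP
    simp [Complex.mul_re, Complex.sub_re, Complex.sub_im, Complex.add_im, Complex.mul_im,
      ← hu, ← hv] at this
    linarith
  have hD : 0 < (1-u)^2 + v^2 := by nlinarith
  have hN : (p z).re * ((1-u)^2 + v^2) = (1 + (1-2*β)*u)*(1-u) - (1-2*β)*v^2 := by
    linear_combination (1-u) * hRe - v * hIm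
  constructor
  · rw [div_le_iff₀ (by linarith : (0:ℝ) < 1+ρ)]
    have h1 : (1-(1-2*β)*ρ) * ((1-u)^2 + v^2) ≤ ((p z).re * (1+ρ)) * ((1-u)^2 + v^2) := by
      nlinarith [mul_nonneg (by linarith : (0:ℝ) ≤ 1-ρ) (by linarith : (0:ℝ) ≤ ρ+u),
        mul_nonneg (by linarith : (0:ℝ) ≤ 1-β) (by linarith : (0:ℝ) ≤ ρ+u)]
    exact le_of_mul_le_mul_right h1 hD
  · rw [le_div_iff₀ (by linarith : (0:ℝ) < 1-ρ)]
    have h1 : ((p z).re * (1-ρ)) * ((1-u)^2 + v^2) ≤ (1+(1-2*β)*ρ) * ((1-u)^2 + v^2) := by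
      nlinarith [mul_nonneg (by linarith : (0:ℝ) ≤ ρ-u) (by linarith : (0:ℝ) ≤ 1-u),
        sq_nonneg v, mul_nonneg (by linarith : (0:ℝ) ≤ 1-β) (sq_nonneg v)]
    exact le_of_mul_le_mul_right h1 hD

end Aux

theorem Pk_beta_lower_bound (k β ρ : ℝ) (hk : 2 ≤ k) (hβ0 : 0 ≤ β) (hβ1 : β < 1)
    (hρ0 : 0 ≤ ρ) (hρ1 : ρ < 1)
    (p q : ℂ → ℂ)
    (hp : DifferentiableOn ℂ p (ball (0:ℂ) 1)) (hq : DifferentiableOn ℂ q (ball (0:ℂ) 1))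
    (hp0 : p 0 = 1) (hq0 : q 0 = 1)
    (hpre : ∀ z ∈ ball (0:ℂ) 1, β < (p z).re)
    (hqre : ∀ z ∈ ball (0:ℂ) 1, β < (q z).re) :
    ∀ z : ℂ, ‖z‖ = ρ →
      ((1-2*β)*ρ^2 - (1-β)*k*ρ + 1) / (1 - ρ^2)
        ≤ ((((k:ℂ)+2)/4) * p z - (((k:ℂ)-2)/4) * q z).re := by
  intro z hz
  have hpb := (carath_bounds β ρ hβ1 hρ0 hρ1 p hp hp0 hpre z hz).1
  have hqb := (carath_bounds β ρ hβ1 hρ0 hρ1 q hq hq0 hqre z hz).2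
  have hre : ((((k:ℂ)+2)/4) * p z - (((k:ℂ)-2)/4) * q z).re
      = (k+2)/4 * (p z).re - (k-2)/4 * (q z).re := by
    simp [Complex.sub_re, Complex.mul_re, Complex.div_re, Complex.add_re, Complex.sub_im,
      Complex.add_im, Complex.normSq_apply]
  rw [hre]
  have h1 : (k+2)/4 * ((1-(1-2*β)*ρ)/(1+ρ)) ≤ (k+2)/4 * (p z).re :=
    mul_le_mul_of_nonneg_left hpb (by linarith)
  have h2 : (k-2)/4 * (q z).re ≤ (k-2)/4 * ((1+(1-2*β)*ρ)/(1-ρ)) :=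
    mul_le_mul_of_nonneg_left hqb (by linarith)
  have heq : ((1-2*β)*ρ^2 - (1-β)*k*ρ + 1) / (1 - ρ^2)
      = (k+2)/4 * ((1-(1-2*β)*ρ)/(1+ρ)) - (k-2)/4 * ((1+(1-2*β)*ρ)/(1-ρ)) := by
    have hρ1' : (1:ℝ) + ρ ≠ 0 := by linarith
    have hρ2' : (1:ℝ) - ρ ≠ 0 := by linarith
    have hρ3' : (1:ℝ) - ρ^2 ≠ 0 := by nlinarith
    field_simp
    ring
  rw [heq]
  linarith
end

section
/- For real k ≥ 2 and 0 ≤ β < 1, the function g(ρ) = ((1-2β)ρ² - (1-β)kρ + 1)/(1-ρ²) is positive for 0 ≤ ρ < r(k,β) and vanishes at ρ = r(k,β), where r(k,β) = ((1-β)k - √((1-β)²k² - 4(1-2β)))/(2(1-2β)) if β ≠ 1/2 and r(k,β) = 2/k if β = 1/2; moreover (1-β)²k² - 4(1-2β) ≥ 0 always holds under these hypotheses. -/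
set_option maxHeartbeats 1000000 in
theorem radius_positivity (k β : ℝ) (hk : 2 ≤ k) (hβ0 : 0 ≤ β) (hβ1 : β < 1)
    (r : ℝ)
    (hr : r = if β = 1/2 then 2/k
          else ((1-β)*k - Real.sqrt ((1-β)^2*k^2 - 4*(1-2*β))) / (2*(1-2*β))) :
    (∀ ρ : ℝ, 0 ≤ ρ → ρ < r →
      0 < ((1-2*β)*ρ^2 - (1-β)*k*ρ + 1) / (1 - ρ^2)) ∧
    ((1-2*β)*r^2 - (1-β)*k*r + 1) / (1 - r^2) = 0 ∧
    0 ≤ (1-β)^2*k^2 - 4*(1-2*β) := by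
  have hk0 : (0:ℝ) < k := by linarith
  have hD : 0 ≤ (1-β)^2*k^2 - 4*(1-2*β) := by
    nlinarith [sq_nonneg β, mul_nonneg (sq_nonneg (1-β)) (show (0:ℝ) ≤ k^2 - 4 by nlinarith)]
  by_cases hβ : β = 1/2
  · subst hβ
    rw [if_pos rfl] at hr
    norm_num at hr ⊢
    subst hr
    have h2k : 2/k ≤ 1 := by rw [div_le_one hk0]; linarith
    refine ⟨?_, ?_, ?_⟩
    · intro ρ h0 hρr
      apply div_pos
      · have : ρ * k < 2 := by
          calc ρ * k < (2/k) * k := by exact mul_lt_mul_of_pos_right hρr hk0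
          _ = 2 := by field_simp
        nlinarith
      · nlinarith
    · left
      field_simp
      norm_num
    · nlinarith
  · rw [if_neg hβ] at hr
    set a : ℝ := 1 - 2*β with ha_def
    set b : ℝ := (1-β)*k with hb_def
    have ha : a ≠ 0 := by
      intro h; apply hβ; rw [ha_def] at h; linarith
    have hb : 0 < b := by rw [hb_def]; nlinarith
    set s : ℝ := Real.sqrt ((1-β)^2*k^2 - 4*(1-2*β)) with hs_def
    have hs0 : 0 ≤ s := Real.sqrt_nonneg _
    have hs2 : s^2 = (1-β)^2*k^2 - 4*(1-2*β) := Real.sq_sqrt hD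
    have hs2' : s^2 = b^2 - 4*a := by rw [hs2]; ring
    have h2ar : 2*a*r = b - s := by
      rw [hr]; field_simp
    have hs : s = b - 2*a*r := by linarith
    have h4 : 4*a*(a*r^2 - b*r + 1) = 0 := by
      linear_combination hs2' - (s + b - 2*a*r) * hs
    have hqr : a*r^2 - b*r + 1 = 0 := by
      rcases mul_eq_zero.mp h4 with h | h
      · exfalso; apply ha; linarith
      · exact h
    -- key positivity of the linear factor
    have key : ∀ x : ℝ, 0 ≤ x → x < r → 0 < b - a*(x+r) := by
      intro x hx hxr
      rcases le_or_gt a 0 with h | h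
      · have hsb : b ≤ s := by nlinarith
        have har : 2*a*r ≤ 0 := by linarith
        have hax : 0 ≤ -a*x := mul_nonneg (by linarith) hx
        nlinarith
      · have : a*x < a*r := mul_lt_mul_of_pos_left hxr h
        nlinarith
    -- r ≤ 1
    have hr1 : r ≤ 1 := by
      by_contra h1
      push_neg at h1
      have hk1 := key 1 (by norm_num) h1
      have hq1 : a - b + 1 = (r-1)*(b - a*(1+r)) := by linear_combination hqr
      have hq1' : a - b + 1 ≤ 0 := by
        nlinarith [mul_nonneg (show (0:ℝ) ≤ 1-β by linarith) (show (0:ℝ) ≤ k-2 by linarith)]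
      nlinarith [mul_pos (show (0:ℝ) < r - 1 by linarith) hk1]
    refine ⟨?_, ?_, hD⟩
    · intro ρ h0 hρr
      have hfac : a*ρ^2 - b*ρ + 1 = (r-ρ)*(b - a*(ρ+r)) := by linear_combination hqr
      have hnum : 0 < a*ρ^2 - b*ρ + 1 := by
        have := mul_pos (show (0:ℝ) < r - ρ by linarith) (key ρ h0 hρr)
        linarith [hfac]
      have hden : 0 < 1 - ρ^2 := by nlinarith
      exact div_pos hnum hden
    · rw [hqr, zero_div]
end

section
/- Let 0 ≤ β < 1, k ≥ 2, c > -1 and let f be analytic on the unit disk with f(0)=0, f′(0)=1, such that f(z)/z ∈ P_k(β) (i.e., f(z)/z = ((k+2)/4)p(z) - ((k-2)/4)q(z) with p,q ∈ P(β)). Define F(z) = ((c+1)/z^c)∫₀^z t^{c-1} f(t) dt. Then F(z)/z ∈ P_k(β). -/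
open Metric intervalIntegral

/-- The Bernardi–Libera integral operator
`F(z) = ((c+1)/z^c) ∫₀^z t^{c-1} f(t) dt` along the radial segment. -/
noncomputable def bernardi (c : ℝ) (f : ℂ → ℂ) (z : ℂ) : ℂ :=
  (((c:ℂ) + 1) / z ^ (c:ℂ)) *
    (z * ∫ s in (0:ℝ)..1, ((s:ℂ) * z) ^ ((c:ℂ) - 1) * f ((s:ℂ) * z))

open MeasureTheory Set

lemma smul_mem_ball {s : ℝ} (hs0 : 0 ≤ s) (hs1 : s ≤ 1) {z : ℂ} (hz : ‖z‖ < 1) :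
    (s:ℂ) * z ∈ ball (0:ℂ) 1 := by
  rw [mem_ball_zero_iff, norm_mul, Complex.norm_real, Real.norm_eq_abs, abs_of_nonneg hs0]
  calc s * ‖z‖ ≤ 1 * ‖z‖ := by nlinarith [norm_nonneg z]
    _ < 1 := by simpa

lemma aesm_aux {G : ℝ → ℂ} (hG : ContinuousOn G (Ioc (0:ℝ) 1)) :
    AEStronglyMeasurable G (volume.restrict (Set.uIoc (0:ℝ) 1)) := by
  rw [uIoc_of_le (zero_le_one)]
  exact hG.aestronglyMeasurable measurableSet_Ioc

lemma contOn_rpow (c : ℝ) : ContinuousOn (fun s : ℝ => (((s:ℝ) ^ c : ℝ) : ℂ)) (Ioc (0:ℝ) 1) :=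
  Complex.continuous_ofReal.comp_continuousOn
    (continuousOn_id.rpow_const (fun s hs => Or.inl (ne_of_gt hs.1)))

lemma contOn_comp {g : ℂ → ℂ} (hg : ContinuousOn g (ball (0:ℂ) 1)) {z : ℂ} (hz : ‖z‖ < 1) :
    ContinuousOn (fun s : ℝ => g ((s:ℂ) * z)) (Icc (0:ℝ) 1) := by
  apply hg.comp ((Complex.continuous_ofReal.mul continuous_const).continuousOn)
  intro s hs
  exact smul_mem_ball hs.1 hs.2 hz

lemma intInt_aux {c : ℝ} (hc : -1 < c) {g : ℂ → ℂ} (hg : ContinuousOn g (ball (0:ℂ) 1))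
    {z : ℂ} (hz : ‖z‖ < 1) :
    IntervalIntegrable (fun s : ℝ => (((s:ℝ) ^ c : ℝ) : ℂ) * g ((s:ℂ) * z)) volume 0 1 := by
  obtain ⟨M, hM⟩ := isCompact_Icc.exists_bound_of_continuousOn (contOn_comp hg hz)
  have hM0 : 0 ≤ M := le_trans (norm_nonneg _) (hM 0 ⟨le_refl 0, zero_le_one⟩)
  refine IntervalIntegrable.mono_fun ((intervalIntegrable_rpow' hc (a := 0) (b := 1)).mul_const M)
    (aesm_aux ((contOn_rpow c).mul ((contOn_comp hg hz).mono Ioc_subset_Icc_self))) ?_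
  rw [Filter.EventuallyLE, ae_restrict_iff' measurableSet_uIoc]
  refine Filter.Eventually.of_forall (fun s hs => ?_)
  rw [uIoc_of_le zero_le_one] at hs
  have h1 : (0:ℝ) < s ^ c := Real.rpow_pos_of_pos hs.1 c
  have h2 : ‖g ((s:ℂ) * z)‖ ≤ M := hM s ⟨hs.1.le, hs.2⟩
  calc ‖(((s:ℝ) ^ c : ℝ) : ℂ) * g ((s:ℂ) * z)‖ = s ^ c * ‖g ((s:ℂ) * z)‖ := by
        rw [norm_mul, Complex.norm_real, Real.norm_eq_abs, abs_of_pos h1]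
    _ ≤ s ^ c * M := by nlinarith
    _ ≤ ‖s ^ c * M‖ := Real.le_norm_self _

noncomputable def pker (c : ℝ) (g : ℂ → ℂ) (z : ℂ) : ℂ :=
  ((c:ℂ) + 1) * ∫ s in (0:ℝ)..1, (((s:ℝ) ^ c : ℝ) : ℂ) * g ((s:ℂ) * z)

lemma pker_zero {c : ℝ} (hc : -1 < c) {g : ℂ → ℂ} (hg0 : g 0 = 1) : pker c g 0 = 1 := by
  have h1 : (∫ s in (0:ℝ)..1, (((s:ℝ) ^ c : ℝ) : ℂ) * g ((s:ℂ) * 0))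
      = ((∫ s in (0:ℝ)..1, (s:ℝ) ^ c : ℝ) : ℂ) := by
    rw [← intervalIntegral.integral_ofReal]
    congr 1; funext s; rw [mul_zero, hg0, mul_one]
  have h2 : (∫ s in (0:ℝ)..1, (s:ℝ) ^ c) = 1 / (c + 1) := by
    rw [integral_rpow (Or.inl hc), Real.one_rpow, Real.zero_rpow (by linarith)]
    ring
  have hcne : (c:ℂ) + 1 ≠ 0 := by
    have h : ((c + 1 : ℝ) : ℂ) ≠ 0 := Complex.ofReal_ne_zero.mpr (by linarith)
    push_cast at h; exact h
  rw [pker, h1, h2]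
  push_cast
  field_simp

lemma pker_re {c β : ℝ} (hc : -1 < c) {g : ℂ → ℂ} (hg : ContinuousOn g (ball (0:ℂ) 1))
    (hgre : ∀ w ∈ ball (0:ℂ) 1, β < (g w).re) {z : ℂ} (hz : ‖z‖ < 1) :
    β < (pker c g z).re := by
  have hFi := intInt_aux hc hg hz
  have hre : (∫ s in (0:ℝ)..1, (((s:ℝ) ^ c : ℝ) : ℂ) * g ((s:ℂ) * z)).re
      = ∫ s in (0:ℝ)..1, (s:ℝ) ^ c * (g ((s:ℂ) * z)).re := by
    have h := Complex.reCLM.intervalIntegral_comp_comm hFi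
    simp only [Complex.reCLM_apply] at h
    rw [← h]
    congr 1; funext s
    simp [Complex.re_ofReal_mul]
  -- integrability of the real part
  have hreInt : IntervalIntegrable (fun s : ℝ => (s:ℝ) ^ c * (g ((s:ℂ) * z)).re) volume 0 1 := by
    constructor
    · refine (Complex.reCLM.integrable_comp hFi.1).congr
        (Filter.Eventually.of_forall fun s => ?_)
      simp [Complex.re_ofReal_mul]
    · refine (Complex.reCLM.integrable_comp hFi.2).congr
        (Filter.Eventually.of_forall fun s => ?_)
      simp [Complex.re_ofReal_mul]
  have hβInt : IntervalIntegrable (fun s : ℝ => (s:ℝ) ^ c * β) volume 0 1 :=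
    (intervalIntegrable_rpow' hc).mul_const β
  have hpos : 0 < ∫ s in (0:ℝ)..1, ((s:ℝ) ^ c * (g ((s:ℂ) * z)).re - (s:ℝ) ^ c * β) := by
    refine intervalIntegral_pos_of_pos_on (hreInt.sub hβInt) (fun s hs => ?_) zero_lt_one
    have h1 : (0:ℝ) < s ^ c := Real.rpow_pos_of_pos hs.1 c
    have h2 : β < (g ((s:ℂ) * z)).re := hgre _ (smul_mem_ball hs.1.le hs.2.le hz)
    nlinarith
  rw [intervalIntegral.integral_sub hreInt hβInt, intervalIntegral.integral_mul_const,
    integral_rpow (Or.inl hc), Real.one_rpow, Real.zero_rpow (by linarith)] at hpos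
  have key : β / (c + 1) < ∫ s in (0:ℝ)..1, (s:ℝ) ^ c * (g ((s:ℂ) * z)).re := by
    have : (1 - 0) / (c + 1) * β = β / (c + 1) := by ring
    linarith [hpos]
  have hc1 : (0:ℝ) < c + 1 := by linarith
  have : (pker c g z).re = (c + 1) * ∫ s in (0:ℝ)..1, (s:ℝ) ^ c * (g ((s:ℂ) * z)).re := by
    rw [pker]
    have : ((c:ℂ) + 1) = ((c + 1 : ℝ) : ℂ) := by push_cast; ring
    rw [this, Complex.re_ofReal_mul, hre]
  rw [this]
  calc β = (c + 1) * (β / (c + 1)) := by field_simp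
    _ < _ := by
      apply mul_lt_mul_of_pos_left key hc1

lemma pker_diff {c : ℝ} (hc : -1 < c) {g : ℂ → ℂ} (hg : DifferentiableOn ℂ g (ball (0:ℂ) 1)) :
    DifferentiableOn ℂ (pker c g) (ball (0:ℂ) 1) := by
  have hga : AnalyticOnNhd ℂ g (ball (0:ℂ) 1) := hg.analyticOnNhd isOpen_ball
  have hg' : ContinuousOn (deriv g) (ball (0:ℂ) 1) :=
    (hga.deriv).continuousOn
  intro z₀ hz₀
  rw [mem_ball_zero_iff] at hz₀
  set ε : ℝ := (1 - ‖z₀‖) / 2 with hε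
  have hεpos : 0 < ε := by
    have := norm_nonneg z₀; simp only [hε]; linarith
  set r : ℝ := (1 + ‖z₀‖) / 2 with hr
  have hr1 : r < 1 := by simp only [hr]; linarith
  have hball : closedBall (0:ℂ) r ⊆ ball (0:ℂ) 1 := by
    intro w hw
    rw [mem_closedBall_zero_iff] at hw
    rw [mem_ball_zero_iff]
    linarith
  obtain ⟨M, hM⟩ := (isCompact_closedBall (0:ℂ) r).exists_bound_of_continuousOn
    (hg'.mono hball)
  have hM0 : 0 ≤ M := by
    refine le_trans (norm_nonneg _) (hM 0 ?_)
    rw [mem_closedBall_zero_iff, norm_zero]; simp only [hr]; positivity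
  -- membership facts
  have hxmem : ∀ x ∈ ball z₀ ε, ‖x‖ ≤ r := by
    intro x hx
    rw [mem_ball] at hx
    calc ‖x‖ = ‖x - z₀ + z₀‖ := by ring_nf
      _ ≤ ‖x - z₀‖ + ‖z₀‖ := norm_add_le _ _
      _ ≤ ε + ‖z₀‖ := by
          have := hx.le; rw [dist_eq_norm] at this; linarith
      _ ≤ r := by simp only [hε, hr]; linarith
  have htx : ∀ (t : ℝ), t ∈ Set.Ioc (0:ℝ) 1 → ∀ x ∈ ball z₀ ε,
      (t:ℂ) * x ∈ closedBall (0:ℂ) r := by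
    intro t ht x hx
    rw [mem_closedBall_zero_iff, norm_mul, Complex.norm_real, Real.norm_eq_abs,
      abs_of_pos ht.1]
    have h1 : ‖x‖ ≤ r := hxmem x hx
    have h2 : 0 ≤ ‖x‖ := norm_nonneg x
    have h3 : 0 < r := by
      have := norm_nonneg z₀; simp only [hr]; linarith
    nlinarith [ht.1.le, ht.2]
  have key := intervalIntegral.hasDerivAt_integral_of_dominated_loc_of_deriv_le
    (F := fun x t => (((t:ℝ) ^ c : ℝ) : ℂ) * g ((t:ℂ) * x))
    (F' := fun x t => (((t:ℝ) ^ c : ℝ) : ℂ) * ((t:ℂ) * deriv g ((t:ℂ) * x)))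
    (x₀ := z₀) (a := 0) (b := 1) (μ := volume) (bound := fun t => t ^ c * M)
    (ball_mem_nhds z₀ hεpos) ?_ ?_ ?_ ?_ ?_ ?_
  · have hd : DifferentiableAt ℂ
        (fun x => ((c:ℂ) + 1) * ∫ t in (0:ℝ)..1, (((t:ℝ) ^ c : ℝ) : ℂ) * g ((t:ℂ) * x)) z₀ :=
      key.2.differentiableAt.const_mul _
    exact hd.differentiableWithinAt
  · -- hF_meas
    filter_upwards [isOpen_ball.eventually_mem (mem_ball_zero_iff.mpr hz₀ :
      z₀ ∈ ball (0:ℂ) 1)] with x hx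
    exact aesm_aux ((contOn_rpow c).mul
      ((contOn_comp hg.continuousOn (mem_ball_zero_iff.mp hx)).mono Ioc_subset_Icc_self))
  · exact intInt_aux hc hg.continuousOn hz₀
  · -- hF'_meas
    refine aesm_aux ((contOn_rpow c).mul (ContinuousOn.mul ?_ ?_))
    · exact Complex.continuous_ofReal.continuousOn
    · exact ((contOn_comp hg' hz₀).mono Ioc_subset_Icc_self)
  · -- h_bound
    refine Filter.Eventually.of_forall (fun t ht => ?_)
    rw [uIoc_of_le zero_le_one] at ht
    intro x hx
    have h1 : (0:ℝ) < t ^ c := Real.rpow_pos_of_pos ht.1 c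
    have h2 : ‖deriv g ((t:ℂ) * x)‖ ≤ M := hM _ (htx t ht x hx)
    have h3 : ‖(((t:ℝ) ^ c : ℝ) : ℂ) * ((t:ℂ) * deriv g ((t:ℂ) * x))‖
        = t ^ c * (t * ‖deriv g ((t:ℂ) * x)‖) := by
      rw [norm_mul, norm_mul, Complex.norm_real, Complex.norm_real, Real.norm_eq_abs,
        Real.norm_eq_abs, abs_of_pos h1, abs_of_pos ht.1]
    rw [h3]
    have h4 : t * ‖deriv g ((t:ℂ) * x)‖ ≤ M := by
      nlinarith [ht.1.le, ht.2, norm_nonneg (deriv g ((t:ℂ) * x))]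
    exact mul_le_mul_of_nonneg_left h4 h1.le
  · exact (intervalIntegrable_rpow' hc).mul_const M
  · -- h_diff
    refine Filter.Eventually.of_forall (fun t ht => ?_)
    rw [uIoc_of_le zero_le_one] at ht
    intro x hx
    have hmem : (t:ℂ) * x ∈ ball (0:ℂ) 1 := hball (htx t ht x hx)
    have h1 : HasDerivAt g (deriv g ((t:ℂ) * x)) ((t:ℂ) * x) :=
      (hg.differentiableAt (isOpen_ball.mem_nhds hmem)).hasDerivAt
    have h2 : HasDerivAt (fun y : ℂ => (t:ℂ) * y) (t:ℂ) x := by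
      simpa using (hasDerivAt_id x).const_mul (t:ℂ)
    have h3 := h1.comp x h2
    have h4 := h3.const_mul (((t:ℝ) ^ c : ℝ) : ℂ)
    rw [show ((t:ℂ) * deriv g ((t:ℂ) * x)) = deriv g ((t:ℂ) * x) * t by ring]
    exact h4

lemma ofReal_mul_cpow_split {s : ℝ} (hs : 0 < s) {z : ℂ} (hz : z ≠ 0) (w : ℂ) :
    ((s:ℂ) * z) ^ w = (s:ℂ) ^ w * z ^ w := by
  have hs' : (s:ℂ) ≠ 0 := Complex.ofReal_ne_zero.mpr hs.ne'
  have hsz : (s:ℂ) * z ≠ 0 := mul_ne_zero hs' hz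
  rw [Complex.cpow_def_of_ne_zero hsz, Complex.cpow_def_of_ne_zero hs',
    Complex.cpow_def_of_ne_zero hz, Complex.log_ofReal_mul hs hz, ← Complex.exp_add,
    Complex.ofReal_log hs.le]
  ring_nf

lemma bernardi_eq {c : ℝ} (hc : -1 < c) {f : ℂ → ℂ} {z : ℂ} (hz1 : ‖z‖ < 1) (hz : z ≠ 0) :
    bernardi c f z / z
      = ((c:ℂ) + 1) * ∫ s in (0:ℝ)..1, (((s:ℝ) ^ c : ℝ) : ℂ) * (f ((s:ℂ) * z) / ((s:ℂ) * z)) := by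
  have hzc : z ^ (c:ℂ) ≠ 0 := by
    rw [Ne, Complex.cpow_eq_zero_iff]
    tauto
  have step1 : (∫ s in (0:ℝ)..1, ((s:ℂ) * z) ^ ((c:ℂ) - 1) * f ((s:ℂ) * z))
      = z ^ (c:ℂ) * ∫ s in (0:ℝ)..1, (((s:ℝ) ^ c : ℝ) : ℂ) * (f ((s:ℂ) * z) / ((s:ℂ) * z)) := by
    rw [← intervalIntegral.integral_const_mul]
    apply intervalIntegral.integral_congr_ae
    refine Filter.Eventually.of_forall (fun s hs => ?_)
    rw [uIoc_of_le zero_le_one] at hs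
    have hs0 : (0:ℝ) < s := hs.1
    have hsC : (s:ℂ) ≠ 0 := Complex.ofReal_ne_zero.mpr hs0.ne'
    have hszC : (s:ℂ) * z ≠ 0 := mul_ne_zero hsC hz
    rw [ofReal_mul_cpow_split hs0 hz]
    have e1 : (s:ℂ) ^ ((c:ℂ) - 1) = (((s:ℝ) ^ (c - 1) : ℝ) : ℂ) := by
      rw [Complex.ofReal_cpow hs0.le]; push_cast; ring_nf
    have e2 : z ^ (c:ℂ) = z ^ ((c:ℂ) - 1) * z := by
      have h := Complex.cpow_add ((c:ℂ) - 1) 1 hz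
      rw [Complex.cpow_one] at h
      rw [← h]; ring_nf
    have e3 : ((s:ℝ) ^ c : ℝ) = (s:ℝ) ^ (c - 1) * s := by
      rw [← Real.rpow_add_one hs0.ne']; ring_nf
    rw [e1, e2, e3]
    push_cast
    field_simp
  rw [bernardi, step1]
  field_simp

theorem bernardi_preserves_Pk (k β c : ℝ) (hk : 2 ≤ k) (hβ0 : 0 ≤ β) (hβ1 : β < 1)
    (hc : -1 < c)
    (f p q : ℂ → ℂ)
    (hf : DifferentiableOn ℂ f (ball (0:ℂ) 1)) (hf0 : f 0 = 0) (hf'0 : deriv f 0 = 1)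
    (hp : DifferentiableOn ℂ p (ball (0:ℂ) 1)) (hq : DifferentiableOn ℂ q (ball (0:ℂ) 1))
    (hp0 : p 0 = 1) (hq0 : q 0 = 1)
    (hpre : ∀ z ∈ ball (0:ℂ) 1, β < (p z).re)
    (hqre : ∀ z ∈ ball (0:ℂ) 1, β < (q z).re)
    (hfpq : ∀ z ∈ ball (0:ℂ) 1, z ≠ 0 →
      f z / z = (((k:ℂ)+2)/4) * p z - (((k:ℂ)-2)/4) * q z) :
    ∃ p' q' : ℂ → ℂ,
      DifferentiableOn ℂ p' (ball (0:ℂ) 1) ∧ p' 0 = 1 ∧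
      (∀ z ∈ ball (0:ℂ) 1, β < (p' z).re) ∧
      DifferentiableOn ℂ q' (ball (0:ℂ) 1) ∧ q' 0 = 1 ∧
      (∀ z ∈ ball (0:ℂ) 1, β < (q' z).re) ∧
      ∀ z ∈ ball (0:ℂ) 1, z ≠ 0 →
        bernardi c f z / z = (((k:ℂ)+2)/4) * p' z - (((k:ℂ)-2)/4) * q' z := by
  refine ⟨pker c p, pker c q, pker_diff hc hp, pker_zero hc hp0,
    fun z hz => pker_re hc hp.continuousOn hpre (mem_ball_zero_iff.mp hz),
    pker_diff hc hq, pker_zero hc hq0,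
    fun z hz => pker_re hc hq.continuousOn hqre (mem_ball_zero_iff.mp hz),
    fun z hz hz0 => ?_⟩
  have hz1 : ‖z‖ < 1 := mem_ball_zero_iff.mp hz
  rw [bernardi_eq hc hz1 hz0]
  have hPi := intInt_aux hc hp.continuousOn hz1
  have hQi := intInt_aux hc hq.continuousOn hz1
  have hsplit : (∫ s in (0:ℝ)..1, (((s:ℝ) ^ c : ℝ) : ℂ) * (f ((s:ℂ) * z) / ((s:ℂ) * z)))
      = (((k:ℂ)+2)/4) * (∫ s in (0:ℝ)..1, (((s:ℝ) ^ c : ℝ) : ℂ) * p ((s:ℂ) * z))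
        - (((k:ℂ)-2)/4) * (∫ s in (0:ℝ)..1, (((s:ℝ) ^ c : ℝ) : ℂ) * q ((s:ℂ) * z)) := by
    rw [← intervalIntegral.integral_const_mul, ← intervalIntegral.integral_const_mul,
      ← intervalIntegral.integral_sub (hPi.const_mul _) (hQi.const_mul _)]
    apply intervalIntegral.integral_congr_ae
    refine Filter.Eventually.of_forall (fun s hs => ?_)
    rw [uIoc_of_le zero_le_one] at hs
    have hmem : (s:ℂ) * z ∈ ball (0:ℂ) 1 := smul_mem_ball hs.1.le hs.2 hz1
    have hne : (s:ℂ) * z ≠ 0 :=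
      mul_ne_zero (Complex.ofReal_ne_zero.mpr hs.1.ne') hz0
    rw [hfpq _ hmem hne]
    ring
  rw [hsplit, pker, pker]
  ring
end
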